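/- Let Ω ⊂ ℝ² be open, x₀ ∈ Ω, d > 0 with the closed ball of radius d around x₀ contained in Ω, and let u, v ∈ C²(Ω) be harmonic in B_d(x₀) \ {x₀}. Then the quantity P(θ) := −2θ ∫_{∂B_θ(x₀)} ⟨∇u, ν⟩⟨∇v, ν⟩ dσ + θ ∫_{∂B_θ(x₀)} ⟨∇u, ∇v⟩ dσ is independent of θ ∈ (0, d]. -/

import Mathlib

open MeasureTheory Real

noncomputable def lap2 (u : EuclideanSpace ℝ (Fin 2) → ℝ) (x : EuclideanSpace ℝ (Fin 2)) : ℝ :=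
  ∑ i : Fin 2, fderiv ℝ (fun y => fderiv ℝ u y (EuclideanSpace.single i 1)) x (EuclideanSpace.single i 1)

noncomputable def unitv (t : ℝ) : EuclideanSpace ℝ (Fin 2) :=
  (WithLp.equiv 2 (Fin 2 → ℝ)).symm ![Real.cos t, Real.sin t]

noncomputable def circpt (x₀ : EuclideanSpace ℝ (Fin 2)) (θ t : ℝ) : EuclideanSpace ℝ (Fin 2) :=
  x₀ + θ • unitv t

/-- The quadratic boundary form P(θ) on the circle ∂B_θ(x₀), written via the
arclength parametrization t ↦ x₀ + θ·(cos t, sin t) (so dσ = θ dt, and the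
outward unit normal at that point is ν = (cos t, sin t)). -/
noncomputable def Pform (u v : EuclideanSpace ℝ (Fin 2) → ℝ)
    (x₀ : EuclideanSpace ℝ (Fin 2)) (θ : ℝ) : ℝ :=
  -2 * θ * (θ * ∫ t in (0:ℝ)..(2 * π),
      fderiv ℝ u (circpt x₀ θ t) (unitv t) * fderiv ℝ v (circpt x₀ θ t) (unitv t))
  + θ * (θ * ∫ t in (0:ℝ)..(2 * π),
      (inner ℝ (gradient u (circpt x₀ θ t)) (gradient v (circpt x₀ θ t)) : ℝ))

/-! ### Auxiliary geometry -/

abbrev EE := EuclideanSpace ℝ (Fin 2)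

noncomputable def tangv (t : ℝ) : EuclideanSpace ℝ (Fin 2) :=
  (WithLp.equiv 2 (Fin 2 → ℝ)).symm ![-Real.sin t, Real.cos t]

noncomputable def LL : (Fin 2 → ℝ) ≃L[ℝ] EE := (EuclideanSpace.equiv (Fin 2) ℝ).symm

lemma hasDerivAt_unitv (t : ℝ) : HasDerivAt unitv (tangv t) t := by
  have h : HasDerivAt (fun s => (![Real.cos s, Real.sin s] : Fin 2 → ℝ))
      (![-Real.sin t, Real.cos t]) t := by
    rw [hasDerivAt_pi]
    intro i
    fin_cases i
    · simpa using (Real.hasDerivAt_cos t)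
    · simpa using (Real.hasDerivAt_sin t)
  exact (LL.toContinuousLinearMap.hasFDerivAt.comp_hasDerivAt t h :)

lemma hasDerivAt_tangv (t : ℝ) : HasDerivAt tangv (-unitv t) t := by
  have h : HasDerivAt (fun s => (![-Real.sin s, Real.cos s] : Fin 2 → ℝ))
      (-![Real.cos t, Real.sin t]) t := by
    rw [hasDerivAt_pi]
    intro i
    fin_cases i
    · simp; exact (Real.hasDerivAt_sin t).neg
    · simpa using (Real.hasDerivAt_cos t)
  exact (LL.toContinuousLinearMap.hasFDerivAt.comp_hasDerivAt t h :)

lemma continuous_unitv : Continuous unitv := by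
  have : Continuous (fun s => (![Real.cos s, Real.sin s] : Fin 2 → ℝ)) := by
    apply continuous_pi
    intro i; fin_cases i
    · simpa using Real.continuous_cos
    · simpa using Real.continuous_sin
  exact LL.continuous.comp this

lemma continuous_tangv : Continuous tangv := by
  have : Continuous (fun s => (![-Real.sin s, Real.cos s] : Fin 2 → ℝ)) := by
    apply continuous_pi
    intro i; fin_cases i
    · simp; exact Real.continuous_sin.neg
    · simpa using Real.continuous_cos
  exact LL.continuous.comp this

lemma norm_unitv (t : ℝ) : ‖unitv t‖ = 1 := by
  rw [EuclideanSpace.norm_eq]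
  have : ∀ i : Fin 2, ‖unitv t i‖ ^ 2 = (![Real.cos t, Real.sin t] i) ^ 2 := by
    intro i; rw [Real.norm_eq_abs, sq_abs]; rfl
  simp only [this]
  rw [Fin.sum_univ_two]
  simp [Real.cos_sq_add_sin_sq]

lemma hasDerivAt_circpt_theta (x₀ : EE) (θ t : ℝ) :
    HasDerivAt (fun s => circpt x₀ s t) (unitv t) θ := by
  simpa [circpt] using ((hasDerivAt_id θ).smul_const (unitv t)).const_add x₀

lemma hasDerivAt_circpt_t (x₀ : EE) (θ t : ℝ) :
    HasDerivAt (fun s => circpt x₀ θ s) (θ • tangv t) t :=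
  ((hasDerivAt_unitv t).const_smul θ).const_add x₀

noncomputable def cmap (x₀ : EE) : ℝ × ℝ → EE := fun p => circpt x₀ p.1 p.2

lemma continuous_cmap (x₀ : EE) : Continuous (cmap x₀) := by
  unfold cmap circpt
  exact continuous_const.add ((continuous_fst).smul (continuous_unitv.comp continuous_snd))

lemma circpt_mem_closedBall (x₀ : EE) {θ : ℝ} (hθ : 0 ≤ θ) (t : ℝ) {r : ℝ} (hr : θ ≤ r) :
    circpt x₀ θ t ∈ Metric.closedBall x₀ r := by
  simp only [Metric.mem_closedBall, circpt, dist_eq_norm, add_sub_cancel_left, norm_smul,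
    norm_unitv, mul_one, Real.norm_eq_abs, abs_of_nonneg hθ]
  exact hr

lemma circpt_mem_ball_diff (x₀ : EE) {θ : ℝ} (hθ : 0 < θ) (t : ℝ) {r : ℝ} (hr : θ < r) :
    circpt x₀ θ t ∈ Metric.ball x₀ r \ {x₀} := by
  constructor
  · simp only [Metric.mem_ball, circpt, dist_eq_norm, add_sub_cancel_left, norm_smul,
      norm_unitv, mul_one, Real.norm_eq_abs, abs_of_pos hθ]
    exact hr
  · simp only [Set.mem_singleton_iff, circpt]
    intro h
    have : θ • unitv t = 0 := by
      have := congrArg (fun z => z - x₀) h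
      simpa [add_sub_cancel_left] using this
    have hn := congrArg norm this
    simp [norm_smul, norm_unitv, abs_of_pos hθ, hθ.ne'] at hn

lemma unitv_two_pi : unitv (2 * π) = unitv 0 := by
  unfold unitv; norm_num
lemma tangv_two_pi : tangv (2 * π) = tangv 0 := by
  unfold tangv; norm_num

/-! ### Calculus facts -/

section calcfacts
variable {Ω : Set EE} {u v : EE → ℝ} {x : EE}

lemma hfd1 (hΩ : IsOpen Ω) (hu : ContDiffOn ℝ 2 u Ω) (hx : x ∈ Ω) :
    HasFDerivAt u (fderiv ℝ u x) x :=
  ((hu.differentiableOn (by norm_num)).differentiableAt (hΩ.mem_nhds hx)).hasFDerivAt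

lemma hfd2 (hΩ : IsOpen Ω) (hu : ContDiffOn ℝ 2 u Ω) (hx : x ∈ Ω) :
    HasFDerivAt (fderiv ℝ u) (fderiv ℝ (fderiv ℝ u) x) x := by
  have h1 : ContDiffOn ℝ 1 (fderiv ℝ u) Ω := hu.fderiv_of_isOpen hΩ (by norm_num)
  exact ((h1.differentiableOn (by norm_num)).differentiableAt (hΩ.mem_nhds hx)).hasFDerivAt

lemma symm2 (hΩ : IsOpen Ω) (hu : ContDiffOn ℝ 2 u Ω) (hx : x ∈ Ω) (w z : EE) :
    fderiv ℝ (fderiv ℝ u) x w z = fderiv ℝ (fderiv ℝ u) x z w :=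
  second_derivative_symmetric_of_eventually
    (Filter.eventually_of_mem (hΩ.mem_nhds hx) (fun _ hy => hfd1 hΩ hu hy))
    (hfd2 hΩ hu hx) w z

lemma fderiv_fderiv_apply (hΩ : IsOpen Ω) (hu : ContDiffOn ℝ 2 u Ω) (hx : x ∈ Ω) (w z : EE) :
    fderiv ℝ (fun y => fderiv ℝ u y w) x z = fderiv ℝ (fderiv ℝ u) x z w := by
  have h := (ContinuousLinearMap.apply ℝ ℝ w).hasFDerivAt.comp x (hfd2 hΩ hu hx)
  have : fderiv ℝ (fun y => fderiv ℝ u y w) x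
      = (ContinuousLinearMap.apply ℝ ℝ w).comp (fderiv ℝ (fderiv ℝ u) x) := h.fderiv
  rw [this]; rfl

lemma unitv_expand (t : ℝ) :
    unitv t = Real.cos t • EuclideanSpace.single (0 : Fin 2) (1:ℝ)
      + Real.sin t • EuclideanSpace.single (1 : Fin 2) (1:ℝ) := by
  ext i; fin_cases i <;> simp [unitv, EuclideanSpace.single_apply]

lemma tangv_expand (t : ℝ) :
    tangv t = (-Real.sin t) • EuclideanSpace.single (0 : Fin 2) (1:ℝ)
      + Real.cos t • EuclideanSpace.single (1 : Fin 2) (1:ℝ) := by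
  ext i; fin_cases i <;> simp [tangv, EuclideanSpace.single_apply]

lemma lap2_rot (hΩ : IsOpen Ω) (hu : ContDiffOn ℝ 2 u Ω) (hx : x ∈ Ω) (t : ℝ) :
    fderiv ℝ (fderiv ℝ u) x (unitv t) (unitv t)
      + fderiv ℝ (fderiv ℝ u) x (tangv t) (tangv t) = lap2 u x := by
  have e : lap2 u x = fderiv ℝ (fderiv ℝ u) x (EuclideanSpace.single (0:Fin 2) (1:ℝ))
        (EuclideanSpace.single (0:Fin 2) (1:ℝ))
      + fderiv ℝ (fderiv ℝ u) x (EuclideanSpace.single (1:Fin 2) (1:ℝ))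
        (EuclideanSpace.single (1:Fin 2) (1:ℝ)) := by
    rw [lap2, Fin.sum_univ_two, fderiv_fderiv_apply hΩ hu hx, fderiv_fderiv_apply hΩ hu hx]
  rw [e, unitv_expand, tangv_expand]
  set A := fderiv ℝ (fderiv ℝ u) x with hA
  simp only [map_add, _root_.map_smul, ContinuousLinearMap.add_apply,
    ContinuousLinearMap.smul_apply, ContinuousLinearMap.coe_smul', Pi.smul_apply, smul_eq_mul]
  linear_combination (A (EuclideanSpace.single (0:Fin 2) (1:ℝ)) (EuclideanSpace.single (0:Fin 2) (1:ℝ))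
    + A (EuclideanSpace.single (1:Fin 2) (1:ℝ)) (EuclideanSpace.single (1:Fin 2) (1:ℝ)))
    * (Real.sin_sq_add_cos_sq t)

lemma inner_gradient_eq (hx : x ∈ Ω) (t : ℝ) :
    (inner ℝ (gradient u x) (gradient v x) : ℝ)
      = fderiv ℝ u x (unitv t) * fderiv ℝ v x (unitv t)
        + fderiv ℝ u x (tangv t) * fderiv ℝ v x (tangv t) := by
  have hg : ∀ (f : EE → ℝ) (w : EE), (inner ℝ (gradient f x) w : ℝ) = fderiv ℝ f x w := by
    intro f w
    exact InnerProductSpace.toDual_symm_apply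
  have hmain : ∀ (a b : EE),
      (inner ℝ a (unitv t) : ℝ) * inner ℝ b (unitv t) + (inner ℝ a (tangv t) : ℝ) * inner ℝ b (tangv t)
        = inner ℝ a b := by
    intro a b
    simp only [unitv_expand, tangv_expand, inner_add_right, real_inner_smul_right]
    have h0 : ∀ c : EE, (inner ℝ c (EuclideanSpace.single (0:Fin 2) (1:ℝ)) : ℝ) = c 0 := by
      intro c; rw [real_inner_comm]; simp [EuclideanSpace.inner_single_left]
    have h1 : ∀ c : EE, (inner ℝ c (EuclideanSpace.single (1:Fin 2) (1:ℝ)) : ℝ) = c 1 := by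
      intro c; rw [real_inner_comm]; simp [EuclideanSpace.inner_single_left]
    rw [h0, h1, h0, h1]
    have hab : (inner ℝ a b : ℝ) = a 0 * b 0 + a 1 * b 1 := by
      simp [PiLp.inner_apply, Fin.sum_univ_two, RCLike.inner_apply]; ring
    rw [hab]
    linear_combination (a 0 * b 0 + a 1 * b 1) * (Real.sin_sq_add_cos_sq t)
  rw [← hg u (unitv t), ← hg v (unitv t), ← hg u (tangv t), ← hg v (tangv t)]
  exact (hmain _ _).symm

end calcfacts

/-! ### The integrand and its derivatives -/

noncomputable def fT (u : EE → ℝ) (x₀ : EE) (θ t : ℝ) : ℝ :=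
  fderiv ℝ u (circpt x₀ θ t) (unitv t)

noncomputable def fS (u : EE → ℝ) (x₀ : EE) (θ t : ℝ) : ℝ :=
  fderiv ℝ u (circpt x₀ θ t) (θ • tangv t)

noncomputable def dθfT (u : EE → ℝ) (x₀ : EE) (θ t : ℝ) : ℝ :=
  fderiv ℝ (fderiv ℝ u) (circpt x₀ θ t) (unitv t) (θ • tangv t) * 0 +
  fderiv ℝ (fderiv ℝ u) (circpt x₀ θ t) (unitv t) (unitv t)

noncomputable def dθfS (u : EE → ℝ) (x₀ : EE) (θ t : ℝ) : ℝ :=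
  fderiv ℝ (fderiv ℝ u) (circpt x₀ θ t) (unitv t) (θ • tangv t)
    + fderiv ℝ u (circpt x₀ θ t) (tangv t)

noncomputable def dtfT (u : EE → ℝ) (x₀ : EE) (θ t : ℝ) : ℝ :=
  fderiv ℝ (fderiv ℝ u) (circpt x₀ θ t) (θ • tangv t) (unitv t)
    + fderiv ℝ u (circpt x₀ θ t) (tangv t)

noncomputable def dtfS (u : EE → ℝ) (x₀ : EE) (θ t : ℝ) : ℝ :=
  fderiv ℝ (fderiv ℝ u) (circpt x₀ θ t) (θ • tangv t) (θ • tangv t)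
    + fderiv ℝ u (circpt x₀ θ t) (θ • (-unitv t))

noncomputable def FF (u v : EE → ℝ) (x₀ : EE) (θ t : ℝ) : ℝ :=
  -(θ^2) * (fT u x₀ θ t * fT v x₀ θ t) + fS u x₀ θ t * fS v x₀ θ t

noncomputable def GG (u v : EE → ℝ) (x₀ : EE) (θ t : ℝ) : ℝ :=
  fS u x₀ θ t * fT v x₀ θ t + fT u x₀ θ t * fS v x₀ θ t

noncomputable def FFθ (u v : EE → ℝ) (x₀ : EE) (θ t : ℝ) : ℝ :=
  -(2 * θ) * (fT u x₀ θ t * fT v x₀ θ t)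
  + -(θ^2) * (dθfT u x₀ θ t * fT v x₀ θ t + fT u x₀ θ t * dθfT v x₀ θ t)
  + (dθfS u x₀ θ t * fS v x₀ θ t + fS u x₀ θ t * dθfS v x₀ θ t)

noncomputable def GGt (u v : EE → ℝ) (x₀ : EE) (θ t : ℝ) : ℝ :=
  (dtfS u x₀ θ t * fT v x₀ θ t + fS u x₀ θ t * dtfT v x₀ θ t)
  + (dtfT u x₀ θ t * fS v x₀ θ t + fT u x₀ θ t * dtfS v x₀ θ t)

section derivs
variable {Ω : Set EE} {u v : EE → ℝ}

/-- Generic chain rule: derivative of `s ↦ Du(c s)(w s)`. -/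
lemma hasDerivAt_D_along (hΩ : IsOpen Ω) (hu : ContDiffOn ℝ 2 u Ω) {c : ℝ → EE} {c' : EE} {w : ℝ → EE} {w' : EE} {s : ℝ}
    (hc : HasDerivAt c c' s) (hw : HasDerivAt w w' s) (hmem : c s ∈ Ω) :
    HasDerivAt (fun r => fderiv ℝ u (c r) (w r))
      (fderiv ℝ (fderiv ℝ u) (c s) c' (w s) + fderiv ℝ u (c s) w') s := by
  have h1 : HasDerivAt (fun r => fderiv ℝ u (c r)) (fderiv ℝ (fderiv ℝ u) (c s) c') s :=
    (hfd2 hΩ hu hmem).comp_hasDerivAt s hc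
  exact h1.clm_apply hw

lemma hasDerivAt_fT_theta (hΩ : IsOpen Ω) (hu : ContDiffOn ℝ 2 u Ω) (x₀ : EE) (θ t : ℝ) (hmem : circpt x₀ θ t ∈ Ω) :
    HasDerivAt (fun s => fT u x₀ s t)
      (fderiv ℝ (fderiv ℝ u) (circpt x₀ θ t) (unitv t) (unitv t)) θ := by
  have := hasDerivAt_D_along hΩ hu (hasDerivAt_circpt_theta x₀ θ t)
    (hasDerivAt_const θ (unitv t)) hmem
  simpa [fT] using this

lemma hasDerivAt_fS_theta (hΩ : IsOpen Ω) (hu : ContDiffOn ℝ 2 u Ω) (x₀ : EE) (θ t : ℝ) (hmem : circpt x₀ θ t ∈ Ω) :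
    HasDerivAt (fun s => fS u x₀ s t) (dθfS u x₀ θ t) θ := by
  have hw : HasDerivAt (fun s : ℝ => s • tangv t) (tangv t) θ := by
    simpa using (hasDerivAt_id θ).smul_const (tangv t)
  exact hasDerivAt_D_along hΩ hu (hasDerivAt_circpt_theta x₀ θ t) hw hmem

lemma hasDerivAt_fT_t (hΩ : IsOpen Ω) (hu : ContDiffOn ℝ 2 u Ω) (x₀ : EE) (θ t : ℝ) (hmem : circpt x₀ θ t ∈ Ω) :
    HasDerivAt (fun r => fT u x₀ θ r) (dtfT u x₀ θ t) t :=
  hasDerivAt_D_along hΩ hu (hasDerivAt_circpt_t x₀ θ t) (hasDerivAt_unitv t) hmem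

lemma hasDerivAt_fS_t (hΩ : IsOpen Ω) (hu : ContDiffOn ℝ 2 u Ω) (x₀ : EE) (θ t : ℝ) (hmem : circpt x₀ θ t ∈ Ω) :
    HasDerivAt (fun r => fS u x₀ θ r) (dtfS u x₀ θ t) t :=
  hasDerivAt_D_along hΩ hu (hasDerivAt_circpt_t x₀ θ t)
    ((hasDerivAt_tangv t).const_smul θ) hmem

lemma hasDerivAt_FF_theta (hΩ : IsOpen Ω) (hu : ContDiffOn ℝ 2 u Ω) (hv : ContDiffOn ℝ 2 v Ω) (x₀ : EE) (θ t : ℝ) (hmem : circpt x₀ θ t ∈ Ω) :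
    HasDerivAt (fun s => FF u v x₀ s t) (FFθ u v x₀ θ t) θ := by
  have h1 := (((hasDerivAt_pow 2 θ).neg.mul
      ((hasDerivAt_fT_theta hΩ hu x₀ θ t hmem).mul (hasDerivAt_fT_theta hΩ hv x₀ θ t hmem))).add
    ((hasDerivAt_fS_theta hΩ hu x₀ θ t hmem).mul (hasDerivAt_fS_theta hΩ hv x₀ θ t hmem)))
  refine h1.congr_deriv ?_
  unfold FFθ dθfT
  simp only [Pi.mul_apply, Pi.neg_apply]
  ring

lemma hasDerivAt_GG_t (hΩ : IsOpen Ω) (hu : ContDiffOn ℝ 2 u Ω) (hv : ContDiffOn ℝ 2 v Ω) (x₀ : EE) (θ t : ℝ) (hmem : circpt x₀ θ t ∈ Ω) :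
    HasDerivAt (fun r => GG u v x₀ θ r) (GGt u v x₀ θ t) t := by
  have h1 := (((hasDerivAt_fS_t hΩ hu x₀ θ t hmem).mul (hasDerivAt_fT_t hΩ hv x₀ θ t hmem)).add
    ((hasDerivAt_fT_t hΩ hu x₀ θ t hmem).mul (hasDerivAt_fS_t hΩ hv x₀ θ t hmem)))
  exact h1

lemma FFθ_eq_GGt (hΩ : IsOpen Ω) (hu : ContDiffOn ℝ 2 u Ω) (hv : ContDiffOn ℝ 2 v Ω) (x₀ : EE) (θ t : ℝ) (hmem : circpt x₀ θ t ∈ Ω)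
    (hlu : lap2 u (circpt x₀ θ t) = 0) (hlv : lap2 v (circpt x₀ θ t) = 0) :
    FFθ u v x₀ θ t = GGt u v x₀ θ t := by
  have hlapu := lap2_rot hΩ hu hmem t
  have hlapv := lap2_rot hΩ hv hmem t
  rw [hlu] at hlapu
  rw [hlv] at hlapv
  have hsu := symm2 hΩ hu hmem (unitv t) (tangv t)
  have hsv := symm2 hΩ hv hmem (unitv t) (tangv t)
  unfold FFθ GGt dθfT dθfS dtfT dtfS fT fS
  simp only [_root_.map_smul, map_neg, smul_eq_mul, ContinuousLinearMap.smul_apply,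
    ContinuousLinearMap.neg_apply, ContinuousLinearMap.coe_smul', Pi.smul_apply]
  linear_combination (-(θ^2) * fderiv ℝ v (circpt x₀ θ t) (unitv t)) * hlapu
    + (-(θ^2) * fderiv ℝ u (circpt x₀ θ t) (unitv t)) * hlapv
    + (θ^2 * fderiv ℝ v (circpt x₀ θ t) (tangv t)) * hsu
    + (θ^2 * fderiv ℝ u (circpt x₀ θ t) (tangv t)) * hsv

end derivs

/-! ### Continuity -/

section cont
variable {Ω : Set EE} {u v : EE → ℝ}

lemma contD1 (hΩ : IsOpen Ω) (hu : ContDiffOn ℝ 2 u Ω) (x₀ : EE) :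
    ContinuousOn (fun p : ℝ × ℝ => fderiv ℝ u (cmap x₀ p)) (cmap x₀ ⁻¹' Ω) :=
  (hu.continuousOn_fderiv_of_isOpen hΩ (by norm_num)).comp
    (continuous_cmap x₀).continuousOn (fun _ hp => hp)

lemma contD2 (hΩ : IsOpen Ω) (hu : ContDiffOn ℝ 2 u Ω) (x₀ : EE) :
    ContinuousOn (fun p : ℝ × ℝ => fderiv ℝ (fderiv ℝ u) (cmap x₀ p)) (cmap x₀ ⁻¹' Ω) :=
  ((hu.fderiv_of_isOpen hΩ (by norm_num)).continuousOn_fderiv_of_isOpen hΩ le_rfl).comp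
    (continuous_cmap x₀).continuousOn (fun _ hp => hp)

lemma cont_unitv2 : Continuous (fun p : ℝ × ℝ => unitv p.2) :=
  continuous_unitv.comp continuous_snd

lemma cont_tangv2 : Continuous (fun p : ℝ × ℝ => tangv p.2) :=
  continuous_tangv.comp continuous_snd

lemma cont_smultangv2 : Continuous (fun p : ℝ × ℝ => p.1 • tangv p.2) :=
  continuous_fst.smul cont_tangv2

lemma contOn_fT (hΩ : IsOpen Ω) (hu : ContDiffOn ℝ 2 u Ω) (x₀ : EE) :
    ContinuousOn (fun p : ℝ × ℝ => fT u x₀ p.1 p.2) (cmap x₀ ⁻¹' Ω) :=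
  (contD1 hΩ hu x₀).clm_apply cont_unitv2.continuousOn

lemma contOn_fS (hΩ : IsOpen Ω) (hu : ContDiffOn ℝ 2 u Ω) (x₀ : EE) :
    ContinuousOn (fun p : ℝ × ℝ => fS u x₀ p.1 p.2) (cmap x₀ ⁻¹' Ω) :=
  (contD1 hΩ hu x₀).clm_apply cont_smultangv2.continuousOn

lemma contOn_dθfT (hΩ : IsOpen Ω) (hu : ContDiffOn ℝ 2 u Ω) (x₀ : EE) :
    ContinuousOn (fun p : ℝ × ℝ => dθfT u x₀ p.1 p.2) (cmap x₀ ⁻¹' Ω) := by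
  unfold dθfT
  exact ((((contD2 hΩ hu x₀).clm_apply cont_unitv2.continuousOn).clm_apply
    cont_smultangv2.continuousOn).mul continuousOn_const).add
    (((contD2 hΩ hu x₀).clm_apply cont_unitv2.continuousOn).clm_apply cont_unitv2.continuousOn)

lemma contOn_dθfS (hΩ : IsOpen Ω) (hu : ContDiffOn ℝ 2 u Ω) (x₀ : EE) :
    ContinuousOn (fun p : ℝ × ℝ => dθfS u x₀ p.1 p.2) (cmap x₀ ⁻¹' Ω) := by
  unfold dθfS
  exact (((contD2 hΩ hu x₀).clm_apply cont_unitv2.continuousOn).clm_apply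
    cont_smultangv2.continuousOn).add ((contD1 hΩ hu x₀).clm_apply cont_tangv2.continuousOn)

lemma contOn_dtfT (hΩ : IsOpen Ω) (hu : ContDiffOn ℝ 2 u Ω) (x₀ : EE) :
    ContinuousOn (fun p : ℝ × ℝ => dtfT u x₀ p.1 p.2) (cmap x₀ ⁻¹' Ω) := by
  unfold dtfT
  exact (((contD2 hΩ hu x₀).clm_apply cont_smultangv2.continuousOn).clm_apply
    cont_unitv2.continuousOn).add ((contD1 hΩ hu x₀).clm_apply cont_tangv2.continuousOn)

lemma contOn_dtfS (hΩ : IsOpen Ω) (hu : ContDiffOn ℝ 2 u Ω) (x₀ : EE) :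
    ContinuousOn (fun p : ℝ × ℝ => dtfS u x₀ p.1 p.2) (cmap x₀ ⁻¹' Ω) := by
  unfold dtfS
  exact (((contD2 hΩ hu x₀).clm_apply cont_smultangv2.continuousOn).clm_apply
    cont_smultangv2.continuousOn).add ((contD1 hΩ hu x₀).clm_apply
    (continuous_fst.smul cont_unitv2.neg).continuousOn)

lemma contOn_FF (hΩ : IsOpen Ω) (hu : ContDiffOn ℝ 2 u Ω) (hv : ContDiffOn ℝ 2 v Ω) (x₀ : EE) :
    ContinuousOn (fun p : ℝ × ℝ => FF u v x₀ p.1 p.2) (cmap x₀ ⁻¹' Ω) := by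
  unfold FF
  exact ((continuous_fst.pow 2).neg.continuousOn.mul
    ((contOn_fT hΩ hu x₀).mul (contOn_fT hΩ hv x₀))).add
    ((contOn_fS hΩ hu x₀).mul (contOn_fS hΩ hv x₀))

lemma contOn_FFθ (hΩ : IsOpen Ω) (hu : ContDiffOn ℝ 2 u Ω) (hv : ContDiffOn ℝ 2 v Ω) (x₀ : EE) :
    ContinuousOn (fun p : ℝ × ℝ => FFθ u v x₀ p.1 p.2) (cmap x₀ ⁻¹' Ω) := by
  unfold FFθ
  exact ((((continuous_const.mul continuous_fst).neg).continuousOn.mul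
      ((contOn_fT hΩ hu x₀).mul (contOn_fT hΩ hv x₀))).add
    ((continuous_fst.pow 2).neg.continuousOn.mul
      (((contOn_dθfT hΩ hu x₀).mul (contOn_fT hΩ hv x₀)).add
        ((contOn_fT hΩ hu x₀).mul (contOn_dθfT hΩ hv x₀))))).add
    (((contOn_dθfS hΩ hu x₀).mul (contOn_fS hΩ hv x₀)).add
      ((contOn_fS hΩ hu x₀).mul (contOn_dθfS hΩ hv x₀)))

lemma contOn_GGt (hΩ : IsOpen Ω) (hu : ContDiffOn ℝ 2 u Ω) (hv : ContDiffOn ℝ 2 v Ω) (x₀ : EE) :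
    ContinuousOn (fun p : ℝ × ℝ => GGt u v x₀ p.1 p.2) (cmap x₀ ⁻¹' Ω) := by
  unfold GGt
  exact (((contOn_dtfS hΩ hu x₀).mul (contOn_fT hΩ hv x₀)).add
    ((contOn_fS hΩ hu x₀).mul (contOn_dtfT hΩ hv x₀))).add
    (((contOn_dtfT hΩ hu x₀).mul (contOn_fS hΩ hv x₀)).add
      ((contOn_fT hΩ hu x₀).mul (contOn_dtfS hΩ hv x₀)))

lemma contOn_inner (hΩ : IsOpen Ω) (hu : ContDiffOn ℝ 2 u Ω) (hv : ContDiffOn ℝ 2 v Ω) (x₀ : EE) :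
    ContinuousOn (fun p : ℝ × ℝ =>
      (inner ℝ (gradient u (cmap x₀ p)) (gradient v (cmap x₀ p)) : ℝ)) (cmap x₀ ⁻¹' Ω) := by
  have hgu : ContinuousOn (fun p : ℝ × ℝ => gradient u (cmap x₀ p)) (cmap x₀ ⁻¹' Ω) := by
    unfold gradient
    exact (InnerProductSpace.toDual ℝ EE).symm.continuous.comp_continuousOn (contD1 hΩ hu x₀)
  have hgv : ContinuousOn (fun p : ℝ × ℝ => gradient v (cmap x₀ p)) (cmap x₀ ⁻¹' Ω) := by
    unfold gradient
    exact (InnerProductSpace.toDual ℝ EE).symm.continuous.comp_continuousOn (contD1 hΩ hv x₀)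
  exact hgu.inner hgv

end cont

/-! ### Main theorem -/

set_option maxHeartbeats 2000000 in
theorem Pform_indep_of_radius (Ω : Set (EuclideanSpace ℝ (Fin 2))) (hΩ : IsOpen Ω)
    (x₀ : EuclideanSpace ℝ (Fin 2)) (hx₀ : x₀ ∈ Ω) (d : ℝ) (hd : 0 < d)
    (hball : Metric.closedBall x₀ d ⊆ Ω)
    (u v : EuclideanSpace ℝ (Fin 2) → ℝ)
    (hu : ContDiffOn ℝ 2 u Ω) (hv : ContDiffOn ℝ 2 v Ω)
    (huh : ∀ x ∈ Metric.ball x₀ d \ {x₀}, lap2 u x = 0)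
    (hvh : ∀ x ∈ Metric.ball x₀ d \ {x₀}, lap2 v x = 0) :
    ∀ θ₁ ∈ Set.Ioc 0 d, ∀ θ₂ ∈ Set.Ioc 0 d,
      Pform u v x₀ θ₁ = Pform u v x₀ θ₂ := by
  classical
  -- enlarge the radius slightly
  obtain ⟨δ, hδpos, hδ⟩ :=
    (isCompact_closedBall x₀ d).exists_thickening_subset_open hΩ hball
  set d' : ℝ := d + δ / 2 with hd'def
  have hdd' : d < d' := by simp [hd'def]; linarith
  have hball' : Metric.closedBall x₀ d' ⊆ Ω := by
    intro y hy
    apply hδ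
    rw [thickening_closedBall hδpos hd.le x₀]
    have : d' < δ + d := by simp [hd'def]; linarith
    exact Metric.mem_ball.2 (lt_of_le_of_lt (Metric.mem_closedBall.1 hy) this)
  have hmemΩ : ∀ {θ : ℝ}, 0 ≤ θ → θ ≤ d' → ∀ t, circpt x₀ θ t ∈ Ω := by
    intro θ h0 h1 t
    exact hball' (circpt_mem_closedBall x₀ h0 t h1)
  -- the reduced integral
  set Q : ℝ → ℝ := fun θ => ∫ t in (0:ℝ)..(2 * π), FF u v x₀ θ t with hQdef
  -- Step A : Pform = Q on (0, d]
  have hPQ : ∀ θ ∈ Set.Ioc 0 d, Pform u v x₀ θ = Q θ := by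
    rintro θ ⟨hθ0, hθd⟩
    have hmem : ∀ t, circpt x₀ θ t ∈ Ω := hmemΩ hθ0.le (hθd.trans hdd'.le)
    have hline : Continuous (fun t : ℝ => ((θ, t) : ℝ × ℝ)) :=
      continuous_const.prodMk continuous_id
    have hmem' : ∀ t : ℝ, ((θ, t) : ℝ × ℝ) ∈ cmap x₀ ⁻¹' Ω := fun t => hmem t
    have c1 : Continuous (fun t => fT u x₀ θ t) :=
      ((contOn_fT hΩ hu x₀).comp_continuous hline hmem').congr (fun _ => rfl)
    have c2 : Continuous (fun t => fT v x₀ θ t) :=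
      ((contOn_fT hΩ hv x₀).comp_continuous hline hmem').congr (fun _ => rfl)
    have c3 : Continuous (fun t =>
        (inner ℝ (gradient u (circpt x₀ θ t)) (gradient v (circpt x₀ θ t)) : ℝ)) :=
      ((contOn_inner hΩ hu hv x₀).comp_continuous hline hmem').congr (fun _ => rfl)
    have hpt : ∀ t : ℝ, FF u v x₀ θ t
        = -2 * θ^2 * (fT u x₀ θ t * fT v x₀ θ t)
          + θ^2 * (inner ℝ (gradient u (circpt x₀ θ t)) (gradient v (circpt x₀ θ t)) : ℝ) := by
      intro t
      rw [inner_gradient_eq (hmem t) t]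
      unfold FF fS fT
      simp only [_root_.map_smul, smul_eq_mul]
      ring
    have hQθ : Q θ = -2 * θ^2 * (∫ t in (0:ℝ)..(2*π), fT u x₀ θ t * fT v x₀ θ t)
        + θ^2 * (∫ t in (0:ℝ)..(2*π),
          (inner ℝ (gradient u (circpt x₀ θ t)) (gradient v (circpt x₀ θ t)) : ℝ)) := by
      rw [hQdef]
      calc (∫ t in (0:ℝ)..(2*π), FF u v x₀ θ t)
          = ∫ t in (0:ℝ)..(2*π), (-2 * θ^2 * (fT u x₀ θ t * fT v x₀ θ t)
            + θ^2 * (inner ℝ (gradient u (circpt x₀ θ t)) (gradient v (circpt x₀ θ t)) : ℝ)) :=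
            intervalIntegral.integral_congr (fun t _ => hpt t)
        _ = (∫ t in (0:ℝ)..(2*π), -2 * θ^2 * (fT u x₀ θ t * fT v x₀ θ t))
            + ∫ t in (0:ℝ)..(2*π), θ^2 *
              (inner ℝ (gradient u (circpt x₀ θ t)) (gradient v (circpt x₀ θ t)) : ℝ) :=
            intervalIntegral.integral_add
              ((continuous_const.mul (c1.mul c2)).intervalIntegrable _ _)
              ((continuous_const.mul c3).intervalIntegrable _ _)
        _ = _ := by
            rw [intervalIntegral.integral_const_mul, intervalIntegral.integral_const_mul]
    rw [hQθ]
    unfold Pform fT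
    ring
  -- Step B : continuity of Q on (0, d')
  have hQcont : ContinuousOn Q (Set.Ioo 0 d') := by
    rw [continuousOn_iff_continuous_restrict]
    have hFcont : Continuous (Function.uncurry
        (fun (x : Set.Ioo (0:ℝ) d') (t : ℝ) => FF u v x₀ x.1 t)) := by
      have h := (contOn_FF hΩ hu hv x₀).comp_continuous
        ((continuous_subtype_val.comp continuous_fst).prodMk continuous_snd)
        (fun q : Set.Ioo (0:ℝ) d' × ℝ => hmemΩ q.1.2.1.le q.1.2.2.le q.2)
      exact h.congr (fun _ => rfl)
    exact intervalIntegral.continuous_parametric_intervalIntegral_of_continuous' (μ := volume) hFcont 0 (2 * π)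
  -- Step C : Q has derivative zero on (0, d)
  have hQderiv : ∀ θ₀ ∈ Set.Ioo 0 d, HasDerivAt Q 0 θ₀ := by
    rintro θ₀ ⟨h0, hd0⟩
    set ε : ℝ := min (θ₀ / 2) ((d - θ₀) / 2) with hεdef
    have hεpos : 0 < ε := lt_min (by linarith) (by linarith)
    have hball_sub : ∀ s ∈ Metric.ball θ₀ ε, s ∈ Set.Ioo 0 d := by
      intro s hs
      rw [Metric.mem_ball, Real.dist_eq, abs_lt] at hs
      have h1 : ε ≤ θ₀ / 2 := min_le_left _ _
      have h2 : ε ≤ (d - θ₀) / 2 := min_le_right _ _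
      constructor <;> [linarith [hs.1]; linarith [hs.2]]
    have hmemθ : ∀ s ∈ Set.Ioo (0:ℝ) d, ∀ t, circpt x₀ s t ∈ Ω := fun s hs t =>
      hmemΩ hs.1.le (hs.2.le.trans hdd'.le) t
    -- compact set and bound
    set K : Set (ℝ × ℝ) := Set.Icc (θ₀ - ε) (θ₀ + ε) ×ˢ Set.uIcc (0:ℝ) (2 * π) with hKdef
    have hKsub : K ⊆ cmap x₀ ⁻¹' Ω := by
      rintro ⟨s, t⟩ ⟨hs, _⟩
      have h1 : ε ≤ θ₀ / 2 := min_le_left _ _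
      have h2 : ε ≤ (d - θ₀) / 2 := min_le_right _ _
      exact hmemΩ (by simp at hs ⊢; linarith [hs.1]) (by simp at hs; linarith [hs.2]) t
    have hKcomp : IsCompact K := isCompact_Icc.prod isCompact_uIcc
    obtain ⟨C, hC⟩ := hKcomp.exists_bound_of_continuousOn
      ((contOn_FFθ hΩ hu hv x₀).mono hKsub)
    -- differentiate under the integral sign
    have key := intervalIntegral.hasDerivAt_integral_of_dominated_loc_of_deriv_le
      (F := fun s t => FF u v x₀ s t) (F' := fun s t => FFθ u v x₀ s t)
      (a := 0) (b := 2 * π) (μ := volume) (x₀ := θ₀) (bound := fun _ => C)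
      (Metric.ball_mem_nhds θ₀ hεpos)
      (Filter.eventually_of_mem (Ioo_mem_nhds h0 hd0) (fun s hs => by
        have hline : Continuous (fun t : ℝ => ((s, t) : ℝ × ℝ)) :=
          continuous_const.prodMk continuous_id
        exact ((((contOn_FF hΩ hu hv x₀).comp_continuous hline
          (fun t => hmemθ s hs t)).congr
            (fun (_ : ℝ) => rfl)).aestronglyMeasurable)))
      (by
        have hline : Continuous (fun t : ℝ => ((θ₀, t) : ℝ × ℝ)) :=
          continuous_const.prodMk continuous_id
        exact (((contOn_FF hΩ hu hv x₀).comp_continuous hline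
          (fun t => hmemθ θ₀ ⟨h0, hd0⟩ t)).congr
            (fun (_ : ℝ) => rfl)).intervalIntegrable _ _)
      (by
        have hline : Continuous (fun t : ℝ => ((θ₀, t) : ℝ × ℝ)) :=
          continuous_const.prodMk continuous_id
        exact (((contOn_FFθ hΩ hu hv x₀).comp_continuous hline
          (fun t => hmemθ θ₀ ⟨h0, hd0⟩ t)).congr
            (fun (_ : ℝ) => rfl)).aestronglyMeasurable)
      (Filter.Eventually.of_forall (fun t ht s hs => by
        have hst : ((s, t) : ℝ × ℝ) ∈ K := by
          constructor
          · rw [Metric.mem_ball, Real.dist_eq, abs_lt] at hs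
            constructor <;> simp <;> linarith [hs.1, hs.2]
          · exact Set.uIoc_subset_uIcc ht
        exact hC _ hst))
      (intervalIntegrable_const)
      (Filter.Eventually.of_forall (fun t ht s hs =>
        hasDerivAt_FF_theta hΩ hu hv x₀ s t (hmemθ s (hball_sub s hs) t)))
    obtain ⟨-, hQ'⟩ := key
    -- the derivative integral vanishes
    have hmem0 : ∀ t, circpt x₀ θ₀ t ∈ Ω := hmemθ θ₀ ⟨h0, hd0⟩
    have hFG : ∀ t : ℝ, FFθ u v x₀ θ₀ t = GGt u v x₀ θ₀ t := fun t =>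
      FFθ_eq_GGt hΩ hu hv x₀ θ₀ t (hmem0 t)
        (huh _ (circpt_mem_ball_diff x₀ h0 t hd0))
        (hvh _ (circpt_mem_ball_diff x₀ h0 t hd0))
    have hint0 : (∫ t in (0:ℝ)..(2 * π), FFθ u v x₀ θ₀ t) = 0 := by
      rw [intervalIntegral.integral_congr (g := fun t => GGt u v x₀ θ₀ t)
        (fun t _ => hFG t)]
      have hline : Continuous (fun t : ℝ => ((θ₀, t) : ℝ × ℝ)) :=
        continuous_const.prodMk continuous_id
      rw [intervalIntegral.integral_eq_sub_of_hasDerivAt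
        (fun t _ => hasDerivAt_GG_t hΩ hu hv x₀ θ₀ t (hmem0 t))
        ((((contOn_GGt hΩ hu hv x₀).comp_continuous hline
          (fun t => hmem0 t)).congr (fun (_ : ℝ) => rfl)).intervalIntegrable _ _)]
      have hper : circpt x₀ θ₀ (2 * π) = circpt x₀ θ₀ 0 := by
        unfold circpt; rw [unitv_two_pi]
      unfold GG fS fT
      rw [hper, unitv_two_pi, tangv_two_pi, sub_self]
    rw [hint0] at hQ'
    exact hQ'
  -- Step D : conclude
  have key : ∀ a b : ℝ, a ∈ Set.Ioc 0 d → b ∈ Set.Ioc 0 d → a ≤ b → Q b = Q a := by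
    intro a b ha hb hab
    have hsub : Set.Icc a b ⊆ Set.Ioo 0 d' := fun x hx =>
      ⟨lt_of_lt_of_le ha.1 hx.1, lt_of_le_of_lt hx.2 (hb.2.trans_lt hdd')⟩
    exact constant_of_has_deriv_right_zero (hQcont.mono hsub)
      (fun x hx => (hQderiv x ⟨lt_of_lt_of_le ha.1 hx.1,
        lt_of_lt_of_le hx.2 hb.2⟩).hasDerivWithinAt) b ⟨hab, le_refl b⟩
  intro θ₁ hθ₁ θ₂ hθ₂
  rw [hPQ θ₁ hθ₁, hPQ θ₂ hθ₂]
  rcases le_total θ₁ θ₂ with h | h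
  · exact (key θ₁ θ₂ hθ₁ hθ₂ h).symm
  · exact key θ₂ θ₁ hθ₂ hθ₁ h
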